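/- For ν > 0, the numerator N(ν) = ν·cos ν + ν·cosh ν − sin ν − sinh ν of d₁ satisfies N(ν) > 0 for all ν in (0, ν₀) where ν₀ is the first positive zero of cos ν + cosh ν; hence d₁(ν) > 0 on (0, ν₀). -/

import Mathlib

private lemma N_hasDerivAt (x : ℝ) :
    HasDerivAt (fun ν : ℝ => ν * Real.cos ν + ν * Real.cosh ν - Real.sin ν - Real.sinh ν)
      (x * Real.sinh x - x * Real.sin x) x := by
  have h1 : HasDerivAt (fun ν : ℝ => ν * Real.cos ν)
      (1 * Real.cos x + x * (-Real.sin x)) x :=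
    (hasDerivAt_id x).mul (Real.hasDerivAt_cos x)
  have h2 : HasDerivAt (fun ν : ℝ => ν * Real.cosh ν)
      (1 * Real.cosh x + x * Real.sinh x) x :=
    (hasDerivAt_id x).mul (Real.hasDerivAt_cosh x)
  have h := ((h1.add h2).sub (Real.hasDerivAt_sin x)).sub (Real.hasDerivAt_sinh x)
  exact h.congr_deriv (by ring)

private lemma N_pos {x : ℝ} (hx : 0 < x) :
    0 < x * Real.cos x + x * Real.cosh x - Real.sin x - Real.sinh x := by
  set f : ℝ → ℝ := fun ν => ν * Real.cos ν + ν * Real.cosh ν - Real.sin ν - Real.sinh ν with hf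
  have hmono : StrictMonoOn f (Set.Ici (0:ℝ)) := by
    apply strictMonoOn_of_deriv_pos (convex_Ici 0)
    · exact Continuous.continuousOn (by fun_prop)
    · intro y hy
      rw [interior_Ici] at hy
      rw [(N_hasDerivAt y).deriv]
      have h1 : Real.sin y < y := Real.sin_lt hy
      have h2 : y < Real.sinh y := Real.self_lt_sinh_iff.mpr hy
      have hy' : (0:ℝ) < y := hy
      nlinarith [mul_pos hy' (sub_pos.mpr (h1.trans h2))]
  have h0 : f 0 = 0 := by simp [hf]
  have := hmono (Set.self_mem_Ici) (Set.mem_Ici.mpr hx.le) hx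
  rw [h0] at this
  exact this

theorem d1_numerator_pos (ν0 : ℝ)
    (hν0 : IsLeast {ν : ℝ | 0 < ν ∧ Real.cos ν + Real.cosh ν = 0} ν0) :
    (∀ ν ∈ Set.Ioo (0:ℝ) ν0,
        0 < ν * Real.cos ν + ν * Real.cosh ν - Real.sin ν - Real.sinh ν) ∧
      ∀ ν ∈ Set.Ioo (0:ℝ) ν0,
        0 < (ν * Real.cos ν + ν * Real.cosh ν - Real.sin ν - Real.sinh ν) /
              (2 * ν ^ 5 * (Real.cos ν + Real.cosh ν)) := by
  have hden : ∀ ν ∈ Set.Ioo (0:ℝ) ν0, 0 < Real.cos ν + Real.cosh ν := by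
    intro ν hν
    by_contra h
    push_neg at h
    have hcont : ContinuousOn (fun x => Real.cos x + Real.cosh x) (Set.Icc 0 ν) :=
      Continuous.continuousOn (by fun_prop)
    have hmem : (0:ℝ) ∈ Set.Icc (Real.cos ν + Real.cosh ν) (Real.cos 0 + Real.cosh 0) := by
      constructor
      · exact h
      · norm_num [Real.cos_zero, Real.cosh_zero]
    obtain ⟨c, hc, hceq⟩ := intermediate_value_Icc' hν.1.le hcont hmem
    have hc0 : c ≠ 0 := by
      intro h0
      rw [h0] at hceq
      norm_num [Real.cos_zero, Real.cosh_zero] at hceq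
    have hcpos : 0 < c := lt_of_le_of_ne hc.1 (Ne.symm hc0)
    have : ν0 ≤ c := hν0.2 ⟨hcpos, hceq⟩
    linarith [hc.2, hν.2]
  refine ⟨fun ν hν => N_pos hν.1, fun ν hν => ?_⟩
  exact div_pos (N_pos hν.1) (by nlinarith [pow_pos hν.1 5, hden ν hν])
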